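/- Let g : (0,∞) → (0,∞) be decreasing and continuous on (0,R₀) with g(r/2) ≤ c_D·g(r) for 0 < r < R₀, and suppose g(r) → ∞ as r → 0+. Fix m₀, j₀ ∈ ℕ with 2^{m₀} > 2·j₀, β > 0 with (1+β)^{j₀} > c_D, α ∈ (0,1/4), and R ∈ (0,R₀). For each j ∈ ℕ choose r_j > 0 with g(r_j) = c_D^{m₀}·(1+β)^{j-1}·g(α⁴·R). Then Σ_{j=1}^∞ r_j < α⁴·R. -/

import Mathlib

open scoped ENNReal

set_option maxHeartbeats 1000000 in
/-- Lemma 5.3 of the paper: with `g` decreasing, continuous on `(0,R₀)`, doubling with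
constant `c_D`, blowing up at `0`, and `r_j` defined by
`g(r_j) = c_D^{m₀} (1+β)^{j-1} g(α⁴ R)`, where `2^{m₀} > 2 j₀` and `(1+β)^{j₀} > c_D`,
the sum of all `r_j`, `j ≥ 1`, is less than `α⁴ R`. -/
theorem stmt3 (g : ℝ → ℝ) (R₀ : ℝ≥0∞) (c_D β α R : ℝ) (m₀ j₀ : ℕ) (r : ℕ → ℝ)
    (hcD : 1 < c_D)
    (hg_pos : ∀ s : ℝ, 0 < s → 0 < g s)
    (hg_dec : ∀ s t : ℝ, 0 < s → s ≤ t → g t ≤ g s)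
    (hg_cont : ContinuousOn g {s : ℝ | 0 < s ∧ ENNReal.ofReal s < R₀})
    (hdbl : ∀ s : ℝ, 0 < s → ENNReal.ofReal s < R₀ → g (s/2) ≤ c_D * g s)
    (hlim : Filter.Tendsto g (nhdsWithin 0 (Set.Ioi 0)) Filter.atTop)
    (hj₀ : 0 < j₀) (hm₀ : 2 * j₀ < 2 ^ m₀)
    (hβ : 0 < β) (hβj : c_D < (1 + β) ^ j₀)
    (hα : α ∈ Set.Ioo (0:ℝ) (1/4)) (hR : 0 < R) (hRR₀ : ENNReal.ofReal R < R₀)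
    (hr : ∀ j : ℕ, 1 ≤ j → 0 < r j ∧ g (r j) = c_D ^ m₀ * (1 + β) ^ (j - 1) * g (α ^ 4 * R)) :
    ∃ S : ℝ, HasSum (fun j : ℕ => r (j + 1)) S ∧ S < α ^ 4 * R := by
  obtain ⟨hα0, hα14⟩ := hα
  set A := α ^ 4 * R with hAdef
  have hApos : 0 < A := by positivity
  have hα1 : α < 1 := by linarith
  have hAR : A < R := by
    have h4 : α ^ 4 < 1 := pow_lt_one₀ hα0.le hα1 (by norm_num)
    nlinarith
  have hAR₀ : ENNReal.ofReal A < R₀ :=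
    lt_of_le_of_lt (ENNReal.ofReal_le_ofReal hAR.le) hRR₀
  have hcD0 : (0:ℝ) < c_D := lt_trans one_pos hcD
  have hgA : 0 < g A := hg_pos A hApos
  -- iterated doubling
  have hiter : ∀ n : ℕ, g (A / 2 ^ n) ≤ c_D ^ n * g A := by
    intro n
    induction n with
    | zero => simp
    | succ n ih =>
      have hle : A / 2 ^ n ≤ A := by
        apply div_le_self hApos.le
        exact one_le_pow₀ one_le_two
      have h1 : ENNReal.ofReal (A / 2 ^ n) < R₀ :=
        lt_of_le_of_lt (ENNReal.ofReal_le_ofReal hle) hAR₀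
      have h2 : 0 < A / 2 ^ n := by positivity
      calc g (A / 2 ^ (n+1)) = g ((A / 2 ^ n) / 2) := by rw [pow_succ, div_div]
        _ ≤ c_D * g (A / 2 ^ n) := hdbl _ h2 h1
        _ ≤ c_D * (c_D ^ n * g A) := mul_le_mul_of_nonneg_left ih hcD0.le
        _ = c_D ^ (n+1) * g A := by ring
  -- strictly decreasing consequence
  have hkey : ∀ u s : ℝ, 0 < s → g s < g u → u < s := by
    intro u s hs h
    by_contra hc
    push_neg at hc
    exact absurd (hg_dec s u hs hc) (not_le.mpr h)
  set c : ℝ := A / 2 ^ m₀ with hcdef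
  have hcpos : 0 < c := by positivity
  have hm₀1 : 1 ≤ m₀ := by
    rcases Nat.eq_zero_or_pos m₀ with h | h
    · subst h; simp at hm₀; omega
    · exact h
  -- bound for n ≥ 1
  have hbound : ∀ n : ℕ, 1 ≤ n → r (n + 1) < c * (1/2) ^ (n / j₀) := by
    intro n hn
    set m := n / j₀ with hmdef
    have hmn : m * j₀ ≤ n := Nat.div_mul_le_self n j₀
    have hβ1 : (1:ℝ) < 1 + β := by linarith
    have hpow : (c_D:ℝ) ^ m < (1 + β) ^ n := by
      rcases Nat.eq_zero_or_pos m with h | h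
      · rw [h, pow_zero]
        exact one_lt_pow₀ hβ1 (by omega)
      · calc (c_D:ℝ) ^ m < ((1 + β) ^ j₀) ^ m :=
              pow_lt_pow_left₀ hβj hcD0.le (by omega)
          _ = (1 + β) ^ (j₀ * m) := by rw [pow_mul]
          _ ≤ (1 + β) ^ n := pow_le_pow_right₀ hβ1.le (le_trans (le_of_eq (mul_comm j₀ m)) hmn)
    have h1 : g (A / 2 ^ (m₀ + m)) ≤ c_D ^ (m₀ + m) * g A := hiter _
    have h2 : c_D ^ (m₀ + m) * g A < c_D ^ m₀ * (1 + β) ^ n * g A := by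
      rw [pow_add, mul_assoc, mul_assoc]
      exact mul_lt_mul_of_pos_left
        (mul_lt_mul_of_pos_right hpow hgA) (pow_pos hcD0 m₀)
    have hg3 : g (r (n + 1)) = c_D ^ m₀ * (1 + β) ^ n * g A := by
      have := (hr (n + 1) (by omega)).2
      simpa using this
    have h4 : g (A / 2 ^ (m₀ + m)) < g (r (n + 1)) := by
      rw [hg3]; linarith
    have h5 : r (n + 1) < A / 2 ^ (m₀ + m) := hkey _ _ (by positivity) h4
    have h6 : A / 2 ^ (m₀ + m) = c * (1/2) ^ m := by
      rw [hcdef, pow_add]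
      field_simp
      rw [← mul_pow]; norm_num
    rwa [h6] at h5
  -- bound for n = 0
  have hbound0 : r 1 < 2 * c := by
    have h1 : g (A / 2 ^ (m₀ - 1)) ≤ c_D ^ (m₀ - 1) * g A := hiter _
    have hg3 : g (r 1) = c_D ^ m₀ * g A := by
      have := (hr 1 le_rfl).2
      simpa using this
    have h2 : c_D ^ (m₀ - 1) * g A < c_D ^ m₀ * g A := by
      have : (c_D:ℝ) ^ (m₀ - 1) < c_D ^ m₀ :=
        pow_lt_pow_right₀ hcD (by omega)
      nlinarith
    have h4 : g (A / 2 ^ (m₀ - 1)) < g (r 1) := by rw [hg3]; linarith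
    have h5 : r 1 < A / 2 ^ (m₀ - 1) := hkey _ _ (by positivity) h4
    have h6 : A / 2 ^ (m₀ - 1) = 2 * c := by
      rw [hcdef]
      have : (2:ℝ) ^ m₀ = 2 ^ (m₀ - 1) * 2 := by
        rw [← pow_succ]
        congr 1
        omega
      rw [this]
      field_simp
    rwa [h6] at h5
  -- the comparison series
  set b : ℕ → ℝ := fun n => c * (1/2) ^ (n / j₀) + (if n = 0 then c else 0) with hbdef
  have hrb : ∀ n : ℕ, r (n + 1) ≤ b n := by
    intro n
    rcases Nat.eq_zero_or_pos n with h | h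
    · subst h
      have hb0 : b 0 = c + c := by norm_num [hbdef]
      rw [zero_add, hb0]
      linarith
    · have := hbound n h
      simp only [hbdef, if_neg (by omega : n ≠ 0)]
      linarith
  haveI : NeZero j₀ := ⟨hj₀.ne'⟩
  -- HasSum of the main part via the div-mod equivalence
  have hgeo : HasSum (fun m : ℕ => c * (1/2:ℝ) ^ m) (c * 2) := by
    have := hasSum_geometric_two.mul_left c
    simpa [one_div] using this
  have hone : HasSum (fun _ : Fin j₀ => (1:ℝ)) (j₀ : ℝ) := by
    have := hasSum_fintype (fun _ : Fin j₀ => (1:ℝ))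
    simpa using this
  have hsummul : Summable (fun p : ℕ × Fin j₀ => (c * (1/2:ℝ) ^ p.1) * 1) :=
    Summable.mul_of_nonneg hgeo.summable hone.summable
      (fun m => by positivity) (fun _ => zero_le_one)
  have hprod : HasSum (fun p : ℕ × Fin j₀ => (c * (1/2:ℝ) ^ p.1) * 1) (c * 2 * j₀) :=
    hgeo.mul hone hsummul
  have hmain : HasSum (fun n : ℕ => c * (1/2:ℝ) ^ (n / j₀)) (c * 2 * j₀) := by
    have := (Nat.divModEquiv j₀).hasSum_iff.mpr hprod
    simpa [Function.comp_def, Nat.divModEquiv] using this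
  have hind : HasSum (fun n : ℕ => if n = 0 then c else 0) c := hasSum_ite_eq 0 c
  have hb : HasSum b (c * 2 * j₀ + c) := hmain.add hind
  -- summability of r ∘ (·+1)
  have hrpos : ∀ n : ℕ, 0 ≤ r (n + 1) := fun n => (hr (n + 1) (by omega)).1.le
  have hsr : Summable (fun n : ℕ => r (n + 1)) :=
    Summable.of_nonneg_of_le hrpos hrb hb.summable
  refine ⟨∑' n, r (n + 1), hsr.hasSum, ?_⟩
  have hle : ∑' n, r (n + 1) ≤ c * 2 * j₀ + c := by
    have := Summable.tsum_le_tsum hrb hsr hb.summable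
    rwa [hb.tsum_eq] at this
  have hnat : 2 * j₀ + 1 < 2 ^ m₀ := by
    have heven : 2 ^ m₀ = 2 * 2 ^ (m₀ - 1) := by
      rw [← pow_succ']
      congr 1
      omega
    omega
  have hfin : c * 2 * j₀ + c < A := by
    have hA : A = c * 2 ^ m₀ := by
      rw [hcdef]; field_simp
    have hcast : (2 * (j₀:ℝ) + 1) < 2 ^ m₀ := by
      have := hnat
      push_cast
      exact_mod_cast (by exact_mod_cast hnat : ((2 * j₀ + 1 : ℕ) : ℝ) < ((2 ^ m₀ : ℕ) : ℝ))
    rw [hA]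
    nlinarith
  linarith
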